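/- Let γ > 0, κ ∈ ℝ, and C ⊂ ℝ⁴ a nonempty closed convex cone, and define f(η,ω) = b(η,ω) + κη, where b is the perspective function b(η,ω) = |ω|²/(2η) for η > 0 and ω ∈ C, b(0,0) = 0, and +∞ otherwise. Then for any (η,ω) ∈ ℝ×ℝ⁴ with γκ ≥ η + |P_C ω|²/(2γ), the proximity operator satisfies prox_{γf}(η,ω) = (0,0); otherwise prox_{γf}(η,ω) = (p*, (p*/(p*+γ)) P_C ω) where p* > 0 is the unique positive root of (p + γκ − η)(p + γ)² − (γ/2)|P_C ω|² = 0. -/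

import Mathlib

/-- The objective whose unique minimizer is `prox_{γ f}(η, ω)`. -/
noncomputable def proxObj (γ : ℝ) (f : ℝ × EuclideanSpace ℝ (Fin 4) → EReal)
    (η : ℝ) (ω : EuclideanSpace ℝ (Fin 4)) : ℝ × EuclideanSpace ℝ (Fin 4) → EReal :=
  fun y => (γ : EReal) * f y + ((((y.1 - η) ^ 2 + ‖y.2 - ω‖ ^ 2) / 2 : ℝ) : EReal)

/-- `q` is the unique minimizer of `F`. -/
def isUniqueMin {X : Type*} (F : X → EReal) (q : X) : Prop :=
  (∀ y, F q ≤ F y) ∧ ∀ y, F y ≤ F q → y = q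

set_option maxHeartbeats 2000000

open RealInnerProductSpace

noncomputable def phiFun (γ κ η A B p : ℝ) : ℝ :=
  γ*κ*p + γ*A/(2*(p+γ)) + (p-η)^2/2 + B/2

lemma phi_case1 (γ κ η A B p : ℝ) (hγ : 0 < γ) (hA : 0 ≤ A) (hp : 0 ≤ p)
    (hcond : γ*κ ≥ η + A/(2*γ)) :
    phiFun γ κ η A B 0 + p^2/2 ≤ phiFun γ κ η A B p := by
  have hpγ : 0 < p + γ := by linarith
  have h1 : phiFun γ κ η A B p
      = phiFun γ κ η A B 0 + p^2/2 + (2*p*(γ*κ-η)*(p+γ) - A*p)/(2*(p+γ)) := by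
    unfold phiFun; field_simp; ring
  have hc' : A ≤ 2*γ*(γ*κ - η) := by
    have h2 : A/(2*γ) ≤ γ*κ - η := by linarith
    have h3 := mul_le_mul_of_nonneg_right h2 (show (0:ℝ) ≤ 2*γ by linarith)
    have h4 : A/(2*γ) * (2*γ) = A := by field_simp
    nlinarith
  have hη : 0 ≤ γ*κ - η := by nlinarith
  have h2 : 0 ≤ 2*p*(γ*κ-η)*(p+γ) - A*p := by
    nlinarith [mul_nonneg (mul_nonneg hp hη) hp, mul_nonneg hp (sub_nonneg.2 hc')]
  have := div_nonneg h2 (by linarith : (0:ℝ) ≤ 2*(p+γ))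
  linarith

lemma root_nonneg (γ κ η A s : ℝ) (hγ : 0 < γ) (hA : 0 ≤ A) (hs : 0 < s)
    (hr : (s + γ*κ - η) * (s+γ)^2 - γ/2*A = 0) : 0 ≤ s + γ*κ - η := by
  by_contra h
  push_neg at h
  have h1 : 0 < (s+γ)^2 := by positivity
  nlinarith [mul_nonneg hγ.le hA]

lemma phi_root_identity (γ κ η A B s p : ℝ) (hγ : 0 < γ) (hs : 0 < s) (hp : 0 ≤ p)
    (hr : (s + γ*κ - η) * (s+γ)^2 - γ/2*A = 0) :
    phiFun γ κ η A B p = phiFun γ κ η A B s + (p-s)^2 * ((s+γ*κ-η)/(p+γ) + 1/2) := by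
  have hpγ : 0 < p + γ := by linarith
  have hsγ : 0 < s + γ := by linarith
  have hA : A = 2*(s+γ*κ-η)*(s+γ)^2/γ := by
    field_simp
    nlinarith [hr]
  unfold phiFun
  rw [hA]
  field_simp
  ring

lemma decomp {F : Type*} [NormedAddCommGroup F] [InnerProductSpace ℝ F]
    (γ κ η p : ℝ) (hγ : 0 < γ) (hp : 0 < p) (u v ω w : F)
    (huv : ⟪u, v⟫ = 0) (hω : ω = u + v) :
    γ*(‖w‖^2/(2*p)+κ*p) + ((p-η)^2 + ‖w-ω‖^2)/2
      = phiFun γ κ η (‖u‖^2) (‖v‖^2) p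
        + ((p+γ)/(2*p) * ‖w - (p/(p+γ))•u‖^2 - ⟪w, v⟫) := by
  have hpγ : 0 < p + γ := by linarith
  have h1 : ‖w - ω‖^2 = ‖w‖^2 - 2*(⟪w,u⟫ + ⟪w,v⟫) + (‖u‖^2 + ‖v‖^2) := by
    rw [hω, norm_sub_sq_real, inner_add_right, norm_add_sq_real, huv]; ring
  have h2 : ‖w - (p/(p+γ))•u‖^2
      = ‖w‖^2 - 2*((p/(p+γ)) * ⟪w,u⟫) + (p/(p+γ))^2*‖u‖^2 := by
    rw [norm_sub_sq_real, real_inner_smul_right, norm_smul, Real.norm_eq_abs, mul_pow, sq_abs]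
  rw [h1, h2]; unfold phiFun; field_simp; ring

theorem stmt13 (γ κ : ℝ) (hγ : 0 < γ)
    (C : Set (EuclideanSpace ℝ (Fin 4)))
    (hCne : C.Nonempty) (hCclosed : IsClosed C) (hCconvex : Convex ℝ C)
    (hCcone : ∀ (c : ℝ), 0 ≤ c → ∀ w ∈ C, c • w ∈ C)
    (PC : EuclideanSpace ℝ (Fin 4) → EuclideanSpace ℝ (Fin 4))
    (hPC : ∀ ω, PC ω ∈ C ∧ ∀ w ∈ C, dist ω (PC ω) ≤ dist ω w)
    (f : ℝ × EuclideanSpace ℝ (Fin 4) → EReal)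
    (hf₁ : ∀ (η : ℝ) (ω : EuclideanSpace ℝ (Fin 4)), 0 < η → ω ∈ C →
      f (η, ω) = ((‖ω‖ ^ 2 / (2 * η) + κ * η : ℝ) : EReal))
    (hf₂ : f (0, 0) = 0)
    (hf₃ : ∀ (η : ℝ) (ω : EuclideanSpace ℝ (Fin 4)), ¬ (0 < η ∧ ω ∈ C) →
      (η, ω) ≠ (0, 0) → f (η, ω) = ⊤)
    (η : ℝ) (ω : EuclideanSpace ℝ (Fin 4)) :
    (γ * κ ≥ η + ‖PC ω‖ ^ 2 / (2 * γ) →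
      isUniqueMin (proxObj γ f η ω) ((0 : ℝ), (0 : EuclideanSpace ℝ (Fin 4)))) ∧
    (¬ γ * κ ≥ η + ‖PC ω‖ ^ 2 / (2 * γ) →
      (∃! p : ℝ, 0 < p ∧ (p + γ * κ - η) * (p + γ) ^ 2 - γ / 2 * ‖PC ω‖ ^ 2 = 0) ∧
      ∀ p : ℝ, 0 < p → (p + γ * κ - η) * (p + γ) ^ 2 - γ / 2 * ‖PC ω‖ ^ 2 = 0 →
        isUniqueMin (proxObj γ f η ω) (p, (p / (p + γ)) • PC ω)) := by
  classical
  haveI : Nonempty C := hCne.to_subtype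
  set u : EuclideanSpace ℝ (Fin 4) := PC ω with hu_def
  have hu : u ∈ C := (hPC ω).1
  have hinf : ‖ω - u‖ = ⨅ w : C, ‖ω - w‖ := by
    apply le_antisymm
    · apply le_ciInf
      intro w
      have h := (hPC ω).2 w w.2
      rw [dist_eq_norm, dist_eq_norm] at h
      rw [hu_def]
      exact h
    · have hbdd : BddBelow (Set.range fun w : C => ‖ω - (w:EuclideanSpace ℝ (Fin 4))‖) := by
        refine ⟨0, ?_⟩
        rintro x ⟨w, rfl⟩
        exact norm_nonneg _
      exact ciInf_le hbdd (⟨u, hu⟩ : C)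
  have hvar : ∀ w ∈ C, ⟪ω - u, w - u⟫ ≤ 0 :=
    (norm_eq_iInf_iff_real_inner_le_zero hCconvex hu).1 hinf
  set v : EuclideanSpace ℝ (Fin 4) := ω - u with hv_def
  have hωuv : ω = u + v := by rw [hv_def]; abel
  have hvu0 : ⟪ω - u, u⟫ = 0 := by
    have h2 : ⟪ω - u, u⟫ ≤ 0 := by
      have h := hvar ((2:ℝ) • u) (hCcone 2 (by norm_num) u hu)
      have e : (2:ℝ) • u - u = u := by rw [two_smul]; abel
      rwa [e] at h
    have h0 : (0:ℝ) ≤ ⟪ω - u, u⟫ := by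
      have h := hvar 0 (by simpa using hCcone 0 le_rfl u hu)
      rw [zero_sub, inner_neg_right] at h
      linarith
    linarith
  have huv : ⟪u, v⟫ = 0 := by rw [hv_def, real_inner_comm]; exact hvu0
  have hwv : ∀ w ∈ C, ⟪w, v⟫ ≤ 0 := by
    intro w hw
    have h1 := hvar w hw
    rw [inner_sub_right, hvu0] at h1
    rw [hv_def, real_inner_comm]
    linarith
  have hωsq : ‖ω‖^2 = ‖u‖^2 + ‖v‖^2 := by
    rw [hωuv, norm_add_sq_real, huv]; ring
  have hγ' : γ ≠ 0 := hγ.ne'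
  -- EReal computations
  have hdom : ∀ (p : ℝ) (w : EuclideanSpace ℝ (Fin 4)), 0 < p → w ∈ C →
      proxObj γ f η ω (p, w)
        = ((γ*(‖w‖^2/(2*p)+κ*p) + ((p-η)^2 + ‖w-ω‖^2)/2 : ℝ) : EReal) := by
    intro p w hp hw
    simp only [proxObj]
    rw [hf₁ p w hp hw]
    norm_cast
  have hzero : proxObj γ f η ω ((0:ℝ), (0:EuclideanSpace ℝ (Fin 4)))
      = (((η^2 + ‖ω‖^2)/2 : ℝ) : EReal) := by
    simp only [proxObj, hf₂, mul_zero, zero_add]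
    norm_cast
    rw [zero_sub, zero_sub, neg_sq, norm_neg]
  have htop : ∀ y : ℝ × EuclideanSpace ℝ (Fin 4), ¬(0 < y.1 ∧ y.2 ∈ C) → y ≠ (0,0) →
      proxObj γ f η ω y = ⊤ := by
    intro y hy hy0
    have hfy : f y = ⊤ := hf₃ y.1 y.2 hy hy0
    simp only [proxObj, hfy]
    rw [EReal.coe_mul_top_of_pos hγ, EReal.top_add_coe]
  have reduce : ∀ (q : ℝ × EuclideanSpace ℝ (Fin 4)) (m : ℝ),
      proxObj γ f η ω q = (m : EReal) →
      (∀ (p : ℝ) (w : EuclideanSpace ℝ (Fin 4)), 0 < p → w ∈ C → (p, w) ≠ q →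
        m < γ*(‖w‖^2/(2*p)+κ*p) + ((p-η)^2 + ‖w-ω‖^2)/2) →
      (((0:ℝ), (0:EuclideanSpace ℝ (Fin 4))) ≠ q → m < (η^2 + ‖ω‖^2)/2) →
      isUniqueMin (proxObj γ f η ω) q := by
    intro q m hq hdlt hzlt
    have strict : ∀ y, y ≠ q → proxObj γ f η ω q < proxObj γ f η ω y := by
      rintro ⟨p, w⟩ hy
      by_cases hd : 0 < p ∧ w ∈ C
      · rw [hq, hdom p w hd.1 hd.2]
        exact_mod_cast hdlt p w hd.1 hd.2 hy
      · by_cases h0 : ((p, w) : ℝ × EuclideanSpace ℝ (Fin 4)) = (0, 0)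
        · rw [h0, hq, hzero]
          exact_mod_cast hzlt (h0 ▸ hy)
        · rw [hq, htop (p, w) hd h0]
          exact EReal.coe_lt_top m
    constructor
    · intro y
      by_cases hy : y = q
      · rw [hy]
      · exact (strict y hy).le
    · intro y hle
      by_contra hy
      exact absurd hle (not_le.2 (strict y hy))
  have hphi0 : phiFun γ κ η (‖u‖^2) (‖v‖^2) 0 = (η^2 + ‖ω‖^2)/2 := by
    unfold phiFun
    rw [hωsq]
    field_simp
    ring
  have hslack : ∀ (p : ℝ) (w : EuclideanSpace ℝ (Fin 4)), 0 < p → w ∈ C →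
      0 ≤ (p+γ)/(2*p) * ‖w - (p/(p+γ))•u‖^2 - ⟪w, v⟫ := by
    intro p w hp hw
    have h1 : (0:ℝ) ≤ (p+γ)/(2*p) * ‖w - (p/(p+γ))•u‖^2 := by positivity
    linarith [hwv w hw]
  constructor
  · -- Case 1
    intro hcond
    apply reduce _ ((η^2 + ‖ω‖^2)/2) hzero ?_ (fun h => absurd rfl h)
    intro p w hp hw _
    have hdec := decomp γ κ η p hγ hp u v ω w huv hωuv
    have hphi := phi_case1 γ κ η (‖u‖^2) (‖v‖^2) p hγ (by positivity) hp.le hcond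
    have hp2 : 0 < p^2/2 := by positivity
    rw [hdec]
    linarith [hslack p w hp hw]
  · -- Case 2
    intro hncond
    push_neg at hncond
    have hnc' : 2*γ*(γ*κ - η) < ‖u‖^2 := by
      have h1 : γ*κ - η < ‖u‖^2/(2*γ) := by linarith
      have h2 := (lt_div_iff₀ (show (0:ℝ) < 2*γ by linarith)).1 h1
      linarith
    obtain ⟨s₀, hs₀_pos, hs₀_root⟩ :
        ∃ s : ℝ, 0 < s ∧ (s + γ*κ - η)*(s+γ)^2 - γ/2*‖u‖^2 = 0 := by
      set g : ℝ → ℝ := fun p => (p + γ*κ - η)*(p+γ)^2 - γ/2*‖u‖^2 with hg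
      have hg0 : g 0 < 0 := by
        simp only [hg]
        nlinarith [mul_lt_mul_of_pos_left hnc' (show (0:ℝ) < γ/2 by linarith)]
      obtain ⟨b, hb_pos, hx, hy⟩ :
          ∃ b : ℝ, 0 < b ∧ γ*‖u‖^2/2 + 1 ≤ b + γ*κ - η ∧ 1 ≤ b + γ := by
        refine ⟨|η - γ*κ| + γ*‖u‖^2/2 + |1-γ| + 1, ?_, ?_, ?_⟩
        · have h1 := abs_nonneg (η - γ*κ)
          have h2 := abs_nonneg (1-γ)
          have h3 : (0:ℝ) ≤ γ*‖u‖^2/2 := by positivity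
          linarith
        · linarith [le_abs_self (η - γ*κ), abs_nonneg (1-γ)]
        · linarith [le_abs_self (1-γ), abs_nonneg (η - γ*κ),
            (by positivity : (0:ℝ) ≤ γ*‖u‖^2/2)]
      have hgb : 0 < g b := by
        simp only [hg]
        have hy2 : 1 ≤ (b+γ)^2 := by nlinarith
        have hx0 : 0 ≤ b + γ*κ - η := by
          nlinarith [(by positivity : (0:ℝ) ≤ γ*‖u‖^2/2)]
        have hmul := mul_le_mul hx hy2 (by norm_num) hx0
        linarith
      have hcont : ContinuousOn g (Set.Icc 0 b) := by
        have : Continuous g := by rw [hg]; fun_prop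
        exact this.continuousOn
      obtain ⟨s, hs_mem, hs_eq⟩ := intermediate_value_Ioo hb_pos.le hcont ⟨hg0, hgb⟩
      exact ⟨s, hs_mem.1, hs_eq⟩
    have huniq : ∀ s₁ s₂ : ℝ,
        (0 < s₁ ∧ (s₁ + γ*κ - η)*(s₁+γ)^2 - γ/2*‖u‖^2 = 0) →
        (0 < s₂ ∧ (s₂ + γ*κ - η)*(s₂+γ)^2 - γ/2*‖u‖^2 = 0) → s₁ = s₂ := by
      rintro s₁ s₂ ⟨h1p, h1r⟩ ⟨h2p, h2r⟩
      have e1 := phi_root_identity γ κ η (‖u‖^2) (‖v‖^2) s₁ s₂ hγ h1p h2p.le h1r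
      have e2 := phi_root_identity γ κ η (‖u‖^2) (‖v‖^2) s₂ s₁ hγ h2p h1p.le h2r
      have n1 := root_nonneg γ κ η (‖u‖^2) s₁ hγ (by positivity) h1p h1r
      have n2 := root_nonneg γ κ η (‖u‖^2) s₂ hγ (by positivity) h2p h2r
      have c1 : (1:ℝ)/2 ≤ (s₁+γ*κ-η)/(s₂+γ) + 1/2 := by
        have := div_nonneg n1 (by linarith : (0:ℝ) ≤ s₂+γ)
        linarith
      have c2 : (1:ℝ)/2 ≤ (s₂+γ*κ-η)/(s₁+γ) + 1/2 := by
        have := div_nonneg n2 (by linarith : (0:ℝ) ≤ s₁+γ)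
        linarith
      have hsq : (s₂ - s₁)^2 = 0 := by
        nlinarith [mul_le_mul_of_nonneg_left c1 (sq_nonneg (s₂-s₁)),
          mul_le_mul_of_nonneg_left c2 (sq_nonneg (s₁-s₂)), sq_nonneg (s₁-s₂)]
      have h2 : s₂ - s₁ = 0 := by
        by_contra hne
        exact absurd hsq (pow_ne_zero 2 hne)
      linarith
    refine ⟨⟨s₀, ⟨hs₀_pos, hs₀_root⟩, fun y hy => huniq y s₀ hy ⟨hs₀_pos, hs₀_root⟩⟩, ?_⟩
    intro s hs hroot
    have hn := root_nonneg γ κ η (‖u‖^2) s hγ (by positivity) hs hroot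
    have hlam : (0:ℝ) ≤ s/(s+γ) := by positivity
    have hsC : (s/(s+γ)) • u ∈ C := hCcone _ hlam u hu
    have hdecq := decomp γ κ η s hγ hs u v ω ((s/(s+γ))•u) huv hωuv
    have hvinner : ⟪(s/(s+γ))•u, v⟫ = (0:ℝ) := by
      rw [real_inner_smul_left, huv]; ring
    have hm : γ*(‖(s/(s+γ))•u‖^2/(2*s)+κ*s) + ((s-η)^2 + ‖(s/(s+γ))•u-ω‖^2)/2
        = phiFun γ κ η (‖u‖^2) (‖v‖^2) s := by
      rw [hdecq, sub_self, norm_zero, hvinner]; ring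
    apply reduce (s, (s/(s+γ)) • u) (phiFun γ κ η (‖u‖^2) (‖v‖^2) s) ?_ ?_ ?_
    · rw [hdom s _ hs hsC, hm]
    · intro p w hp hw hne
      have hdec := decomp γ κ η p hγ hp u v ω w huv hωuv
      rw [hdec]
      by_cases hps : p = s
      · subst hps
        have hwne : w ≠ (p/(p+γ))•u := by
          intro hw'
          exact hne (by rw [hw'])
        have hnz : w - (p/(p+γ))•u ≠ 0 := sub_ne_zero.2 hwne
        have hnorm : 0 < ‖w - (p/(p+γ))•u‖^2 := pow_pos (norm_pos_iff.mpr hnz) 2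
        have hfac : 0 < (p+γ)/(2*p) := by positivity
        have hpos := mul_pos hfac hnorm
        linarith [hwv w hw]
      · have e := phi_root_identity γ κ η (‖u‖^2) (‖v‖^2) s p hγ hs hp.le hroot
        have c : (0:ℝ) ≤ (s+γ*κ-η)/(p+γ) := div_nonneg hn (by linarith)
        have hpsne : p - s ≠ 0 := sub_ne_zero.2 hps
        have hd2 : 0 < (p-s)^2 :=
          lt_of_le_of_ne (sq_nonneg _) (Ne.symm (pow_ne_zero 2 hpsne))
        nlinarith [hslack p w hp hw, mul_nonneg (sq_nonneg (p-s)) c]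
    · intro _
      have e := phi_root_identity γ κ η (‖u‖^2) (‖v‖^2) s 0 hγ hs le_rfl hroot
      have c : (0:ℝ) ≤ (s+γ*κ-η)/(0+γ) := div_nonneg hn (by linarith)
      have hd2 : 0 < ((0:ℝ)-s)^2 := by nlinarith [mul_pos hs hs]
      nlinarith [mul_nonneg (sq_nonneg ((0:ℝ)-s)) c, e, hphi0]
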